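/- Positive definiteness of the subspace distance: for κ-orthonormal m×r matrices T₁ and T₂, one has ‖T₁ᵀ K T₂‖_F² = r (equivalently Dist_κ(T₁,T₂) = 0) if and only if the column span of T₁ equals the column span of T₂ as subspaces of ℝ^m. -/

import Mathlib

open Matrix

/-- Frobenius norm of a real matrix. -/
noncomputable def frobNorm {α β : Type*} [Fintype α] [Fintype β] (M : Matrix α β ℝ) : ℝ :=
  Real.sqrt (∑ i, ∑ j, (M i j) ^ 2)

/-- Subspace distance between two κ-orthonormal bases. -/
noncomputable def distK {m r : ℕ} (κ : Fin m → ℝ) (T₁ T₂ : Matrix (Fin m) (Fin r) ℝ) : ℝ :=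
  Real.sqrt ((r : ℝ) - (frobNorm (T₁ᵀ * Matrix.diagonal κ * T₂)) ^ 2)

lemma main_aux {m r : ℕ} (κ : Fin m → ℝ) (hκ : ∀ i, 0 < κ i)
    (T₁ T₂ : Matrix (Fin m) (Fin r) ℝ)
    (hT₁ : T₁ᵀ * Matrix.diagonal κ * T₁ = 1)
    (hT₂ : T₂ᵀ * Matrix.diagonal κ * T₂ = 1) :
    ((∑ i, ∑ j, ((T₁ᵀ * Matrix.diagonal κ * T₂) i j) ^ 2) = (r : ℝ) ↔
      T₂ = T₁ * (T₁ᵀ * Matrix.diagonal κ * T₂)) ∧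
    (∑ i, ∑ j, ((T₁ᵀ * Matrix.diagonal κ * T₂) i j) ^ 2) ≤ (r : ℝ) := by
  set C := T₁ᵀ * Matrix.diagonal κ * T₂ with hC
  set M := T₂ - T₁ * C with hM
  have hC' : T₂ᵀ * Matrix.diagonal κ * T₁ = Cᵀ := by
    rw [hC, transpose_mul, transpose_mul, transpose_transpose, Matrix.diagonal_transpose,
      Matrix.mul_assoc]
  have expand : Mᵀ * Matrix.diagonal κ * M = 1 - Cᵀ * C := by
    have hMT : Mᵀ = T₂ᵀ - Cᵀ * T₁ᵀ := by rw [hM, transpose_sub, transpose_mul]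
    rw [hMT, hM, Matrix.sub_mul, Matrix.sub_mul, Matrix.mul_sub, Matrix.mul_sub, hT₂,
      show T₂ᵀ * Matrix.diagonal κ * (T₁ * C) = Cᵀ * C from by rw [← Matrix.mul_assoc, hC'],
      show Cᵀ * T₁ᵀ * Matrix.diagonal κ * T₂ = Cᵀ * C from by
        rw [Matrix.mul_assoc Cᵀ T₁ᵀ _, Matrix.mul_assoc Cᵀ _ T₂],
      show Cᵀ * T₁ᵀ * Matrix.diagonal κ * (T₁ * C) = Cᵀ * C from by
        rw [Matrix.mul_assoc Cᵀ T₁ᵀ _, Matrix.mul_assoc Cᵀ _ (T₁ * C),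
          ← Matrix.mul_assoc (T₁ᵀ * Matrix.diagonal κ) T₁ C, hT₁, Matrix.one_mul]]
    abel
  have htr : Matrix.trace (Mᵀ * Matrix.diagonal κ * M)
      = (r : ℝ) - ∑ i, ∑ j, (C i j) ^ 2 := by
    rw [expand, Matrix.trace_sub, Matrix.trace_one, Fintype.card_fin]
    congr 1
    rw [Finset.sum_comm]
    simp [Matrix.trace, Matrix.diag, Matrix.mul_apply, sq]
  have htr2 : Matrix.trace (Mᵀ * Matrix.diagonal κ * M)
      = ∑ j, ∑ i, κ i * (M i j) ^ 2 := by
    simp only [Matrix.trace, Matrix.diag, Matrix.mul_apply, Matrix.mul_diagonal,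
      Matrix.transpose_apply]
    refine Finset.sum_congr rfl fun j _ => Finset.sum_congr rfl fun i _ => ?_
    simp [Matrix.diagonal_apply, mul_ite, mul_zero, Finset.sum_ite_eq, Finset.sum_ite_eq']
    ring
  have hnonneg : (0:ℝ) ≤ ∑ j, ∑ i, κ i * (M i j) ^ 2 := by
    apply Finset.sum_nonneg; intro j _; apply Finset.sum_nonneg; intro i _
    exact mul_nonneg (hκ i).le (sq_nonneg _)
  refine ⟨⟨fun h => ?_, fun h => ?_⟩, by linarith [htr.symm.trans htr2]⟩
  · have h0 : ∑ j, ∑ i, κ i * (M i j) ^ 2 = 0 := by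
      rw [← htr2, htr, h]; ring
    have hM0 : M = 0 := by
      ext i j
      have h1 := (Finset.sum_eq_zero_iff_of_nonneg (fun j _ => Finset.sum_nonneg
        (fun i _ => mul_nonneg (hκ i).le (sq_nonneg _)))).mp h0 j (Finset.mem_univ j)
      have h2 := (Finset.sum_eq_zero_iff_of_nonneg (fun i _ =>
        mul_nonneg (hκ i).le (sq_nonneg _))).mp h1 i (Finset.mem_univ i)
      have h4 : M i j ^ 2 = 0 := by
        rcases mul_eq_zero.mp h2 with h' | h'
        · exact absurd h' (hκ i).ne'
        · exact h'
      simpa using sq_eq_zero_iff.mp h4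
    have h3 : T₂ - T₁ * C = 0 := by rw [← hM]; exact hM0
    exact sub_eq_zero.mp h3
  · have hM0 : M = 0 := by rw [hM, h]; exact sub_self _
    have h5 := htr2.symm.trans htr
    rw [hM0] at h5
    simp at h5
    linarith

lemma frob_sq {α β : Type*} [Fintype α] [Fintype β] (M : Matrix α β ℝ) :
    (frobNorm M) ^ 2 = ∑ i, ∑ j, (M i j) ^ 2 := by
  rw [frobNorm, Real.sq_sqrt]
  exact Finset.sum_nonneg fun i _ => Finset.sum_nonneg fun j _ => sq_nonneg _

/-- Positive definiteness of the subspace distance. -/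
theorem dist_eq_zero_iff_span_eq (m r : ℕ) (hm : 0 < m) (hr : 0 < r)
    (κ : Fin m → ℝ) (hκ : ∀ i, 0 < κ i)
    (T₁ T₂ : Matrix (Fin m) (Fin r) ℝ)
    (hT₁ : T₁ᵀ * Matrix.diagonal κ * T₁ = 1)
    (hT₂ : T₂ᵀ * Matrix.diagonal κ * T₂ = 1) :
    ((frobNorm (T₁ᵀ * Matrix.diagonal κ * T₂)) ^ 2 = (r : ℝ) ↔
      LinearMap.range T₁.mulVecLin = LinearMap.range T₂.mulVecLin) ∧
    (distK κ T₁ T₂ = 0 ↔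
      LinearMap.range T₁.mulVecLin = LinearMap.range T₂.mulVecLin) := by
  obtain ⟨hiff, hle⟩ := main_aux κ hκ T₁ T₂ hT₁ hT₂
  obtain ⟨hiff', hle'⟩ := main_aux κ hκ T₂ T₁ hT₂ hT₁
  have hC' : T₂ᵀ * Matrix.diagonal κ * T₁ = (T₁ᵀ * Matrix.diagonal κ * T₂)ᵀ := by
    rw [transpose_mul, transpose_mul, transpose_transpose, Matrix.diagonal_transpose,
      Matrix.mul_assoc]
  have hswap : (∑ i, ∑ j, ((T₂ᵀ * Matrix.diagonal κ * T₁) i j) ^ 2)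
      = ∑ i, ∑ j, ((T₁ᵀ * Matrix.diagonal κ * T₂) i j) ^ 2 := by
    rw [hC', Finset.sum_comm]
    simp [Matrix.transpose_apply]
  rw [hswap] at hiff' hle'
  have incl : ∀ (A B : Matrix (Fin m) (Fin r) ℝ),
      B = A * (Aᵀ * Matrix.diagonal κ * B) →
      LinearMap.range B.mulVecLin ≤ LinearMap.range A.mulVecLin := by
    intro A B h
    rw [h, Matrix.mulVecLin_mul]
    exact LinearMap.range_comp_le_range _ _
  have main : (frobNorm (T₁ᵀ * Matrix.diagonal κ * T₂)) ^ 2 = (r : ℝ) ↔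
      LinearMap.range T₁.mulVecLin = LinearMap.range T₂.mulVecLin := by
    rw [frob_sq]
    constructor
    · intro h
      exact le_antisymm (incl T₂ T₁ (hiff'.mp h)) (incl T₁ T₂ (hiff.mp h))
    · intro h
      apply hiff.mpr
      ext i j
      have hmem : T₂.mulVecLin (Pi.single j 1) ∈ LinearMap.range T₁.mulVecLin := by
        rw [h]; exact LinearMap.mem_range_self _ _
      obtain ⟨x, hx⟩ := hmem
      have hx' : T₁ *ᵥ x = T₂ *ᵥ Pi.single j 1 := hx
      have h1 : (T₁ * (T₁ᵀ * Matrix.diagonal κ * T₂)) *ᵥ Pi.single j 1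
          = T₂ *ᵥ Pi.single j 1 := by
        calc (T₁ * (T₁ᵀ * Matrix.diagonal κ * T₂)) *ᵥ Pi.single j 1
            = T₁ *ᵥ ((T₁ᵀ * Matrix.diagonal κ * T₂) *ᵥ Pi.single j 1) :=
              (Matrix.mulVec_mulVec _ _ _).symm
          _ = T₁ *ᵥ ((T₁ᵀ * Matrix.diagonal κ) *ᵥ (T₂ *ᵥ Pi.single j 1)) := by
              simp only [Matrix.mulVec_mulVec, Matrix.mul_assoc]
          _ = T₁ *ᵥ ((T₁ᵀ * Matrix.diagonal κ) *ᵥ (T₁ *ᵥ x)) := by rw [hx']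
          _ = T₁ *ᵥ ((T₁ᵀ * Matrix.diagonal κ * T₁) *ᵥ x) := by
              simp only [Matrix.mulVec_mulVec, Matrix.mul_assoc]
          _ = T₁ *ᵥ x := by rw [hT₁, Matrix.one_mulVec]
          _ = T₂ *ᵥ Pi.single j 1 := hx'
      have h2 := congrFun h1 i
      simp only [Matrix.mulVec_single, mul_one, Pi.smul_apply, MulOpposite.op_one, one_smul,
        Matrix.col_apply] at h2
      exact h2.symm
  refine ⟨main, ?_⟩
  rw [← main, distK, Real.sqrt_eq_zero']
  have e := frob_sq (T₁ᵀ * Matrix.diagonal κ * T₂)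
  constructor <;> intro h <;> linarith
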